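/- The Z-transform of the sampled cubic B-spline admits the non-causal stable decomposition: for all z with |α| < |z| < 1/|α|, 6/(z + 4 + z⁻¹) = -(6α/(1-α²)) · (1/(1 - αz⁻¹) + 1/(1 - αz) - 1), where α = -2 + √3. -/

import Mathlib

/-- `α = -2 + √3`, the stable pole of the direct cubic B-spline filter. -/
noncomputable def alphaC : ℂ := ((-2 + Real.sqrt 3 : ℝ) : ℂ)

/-- Non-causal stable decomposition of the ideal direct cubic B-spline filter: on the
annulus `|α| < |z| < 1/|α|`,
`6/(z + 4 + z⁻¹) = -(6α/(1-α²)) (1/(1-αz⁻¹) + 1/(1-αz) - 1)`. -/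
theorem stmt18 :
    ∀ z : ℂ, ‖alphaC‖ < ‖z‖ →
      ‖z‖ < 1 / ‖alphaC‖ →
      6 / (z + 4 + z⁻¹) =
        -(6 * alphaC / (1 - alphaC ^ 2)) *
          (1 / (1 - alphaC * z⁻¹) + 1 / (1 - alphaC * z) - 1) := by
  have h3 : Real.sqrt 3 ^ 2 = 3 := Real.sq_sqrt (by norm_num)
  have hs3 : Real.sqrt 3 < 2 := by nlinarith [Real.sqrt_nonneg 3]
  have hs3' : (1:ℝ) < Real.sqrt 3 := by nlinarith [Real.sqrt_nonneg 3]
  have hquad : alphaC ^ 2 + 4 * alphaC + 1 = 0 := by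
    have : ((-2 + Real.sqrt 3) ^ 2 + 4 * (-2 + Real.sqrt 3) + 1 : ℝ) = 0 := by nlinarith
    calc alphaC ^ 2 + 4 * alphaC + 1
        = (((-2 + Real.sqrt 3) ^ 2 + 4 * (-2 + Real.sqrt 3) + 1 : ℝ) : ℂ) := by
          simp only [alphaC]; push_cast; ring
      _ = 0 := by rw [this]; norm_num
  have habs : ‖alphaC‖ = 2 - Real.sqrt 3 := by
    simp only [alphaC, Complex.norm_real, Real.norm_eq_abs]
    rw [abs_of_neg (by linarith)]; ring
  have haposR : (0:ℝ) < ‖alphaC‖ := by rw [habs]; linarith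
  have ha1 : ‖alphaC‖ < 1 := by rw [habs]; linarith
  intro z h1 h2
  have hz0 : z ≠ 0 := by
    intro h; rw [h] at h1; simp at h1; linarith
  have hzpos : 0 < ‖z‖ := lt_trans haposR h1
  have hd1 : 1 - alphaC * z⁻¹ ≠ 0 := by
    intro h
    have : alphaC * z⁻¹ = 1 := by linear_combination -h
    have := congrArg norm this
    rw [norm_mul, norm_inv, norm_one] at this
    have : ‖alphaC‖ = ‖z‖ := by
      field_simp at this; linarith [this]
    linarith
  have hd2 : 1 - alphaC * z ≠ 0 := by
    intro h
    have : alphaC * z = 1 := by linear_combination -h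
    have h' := congrArg norm this
    rw [norm_mul, norm_one] at h'
    have : ‖z‖ < 1 / ‖alphaC‖ := h2
    rw [lt_div_iff₀ haposR] at this
    rw [mul_comm] at h'
    linarith [h']
  have hd3 : 1 - alphaC ^ 2 ≠ 0 := by
    intro h
    have : alphaC ^ 2 = 1 := by linear_combination -h
    have h' := congrArg norm this
    rw [norm_pow, norm_one] at h'
    nlinarith [h']
  have hainv : alphaC ≠ 0 := by
    intro h; rw [h] at haposR; simp at haposR
  have hden : z + 4 + z⁻¹ ≠ 0 := by
    intro h
    have hpoly : z ^ 2 + 4 * z + 1 = 0 := by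
      have := congrArg (· * z) h
      field_simp at this
      linear_combination this
    have hinv : alphaC * alphaC⁻¹ = 1 := mul_inv_cancel₀ hainv
    have hfac' : alphaC * ((z - alphaC) * (z - alphaC⁻¹)) = 0 := by
      linear_combination alphaC * hpoly - z * hquad + (alphaC - z) * hinv
    rcases mul_eq_zero.1 hfac' with h' | h'
    · exact hainv h'
    rcases mul_eq_zero.1 h' with h' | h'
    · have : z = alphaC := by linear_combination h'
      rw [this] at h1; exact lt_irrefl _ h1
    · have hz : z = alphaC⁻¹ := by linear_combination h'
      have : ‖z‖ = 1 / ‖alphaC‖ := by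
        rw [hz, norm_inv, one_div]
      rw [this] at h2; exact lt_irrefl _ h2
  have hza : z - alphaC ≠ 0 := by
    intro h
    have : z = alphaC := by linear_combination h
    rw [this] at h1; exact lt_irrefl _ h1
  have hP : 1 + z * 4 + z ^ 2 ≠ 0 := by
    intro h
    apply hden
    have : z * (z + 4 + z⁻¹) = 1 + z * 4 + z ^ 2 := by
      field_simp; ring
    have h2' : z * (z + 4 + z⁻¹) = 0 := by rw [this, h]
    rcases mul_eq_zero.1 h2' with h' | h'
    · exact absurd h' hz0
    · exact h'
  have hu : (1 + z * 4 + z ^ 2) * (1 + z * 4 + z ^ 2)⁻¹ = 1 := mul_inv_cancel₀ hP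
  field_simp
  have hq : z * (z + 4) + 1 ≠ 0 := by intro h; apply hP; linear_combination h
  have hr : 1 - z * alphaC ≠ 0 := by rw [mul_comm]; exact hd2
  field_simp
  linear_combination z ^ 2 * (1 - alphaC ^ 2) * hquad
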